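/- In a dagger category, for any map f : A ⟶ B the following are equivalent: (i) f is †-Drazin (has a †-Drazin inverse); (ii) f† is †-Drazin; (iii) the endomorphism f ≫ f† : A ⟶ A is Drazin (has a Drazin inverse); (iv) the endomorphism f† ≫ f : B ⟶ B is Drazin. -/
import Mathlib


open CategoryTheory

universe v u

/-- A dagger on a category: an identity-on-objects contravariant involution. -/
structure Dagger (C : Type u) [Category.{v} C] where
  dag : ∀ {X Y : C}, (X ⟶ Y) → (Y ⟶ X)
  dag_id : ∀ X : C, dag (𝟙 X) = 𝟙 X
  dag_comp : ∀ {X Y Z : C} (f : X ⟶ Y) (g : Y ⟶ Z), dag (f ≫ g) = dag g ≫ dag f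
  dag_dag : ∀ {X Y : C} (f : X ⟶ Y), dag (dag f) = f

/-- Iterated composition power of an endomorphism, with `cpow x 0 = 𝟙 A`. -/
def cpow {C : Type u} [Category.{v} C] {A : C} (x : A ⟶ A) : ℕ → (A ⟶ A)
  | 0 => 𝟙 A
  | n + 1 => cpow x n ≫ x

/-- `p` is a †-Drazin inverse of `f`. -/
def IsDagDrazinInv {C : Type u} [Category.{v} C] (D : Dagger C)
    {A B : C} (f : A ⟶ B) (p : B ⟶ A) : Prop :=
  (∃ k : ℕ, cpow (f ≫ D.dag f) k ≫ f ≫ p = cpow (f ≫ D.dag f) k ∧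
    p ≫ f ≫ cpow (D.dag f ≫ f) k = cpow (D.dag f ≫ f) k) ∧
  p ≫ f ≫ p = p ∧
  D.dag (f ≫ p) = f ≫ p ∧
  D.dag (p ≫ f) = p ≫ f

/-- `d` is a Drazin inverse of the endomorphism `x`. -/
def IsDrazinInv {C : Type u} [Category.{v} C] {A : C} (x d : A ⟶ A) : Prop :=
  (∃ k : ℕ, cpow x (k + 1) ≫ d = cpow x k) ∧
  d ≫ x ≫ d = d ∧
  x ≫ d = d ≫ x

section Aux

variable {C : Type u} [Category.{v} C]

lemma cpow_succ {A : C} (x : A ⟶ A) (n : ℕ) : cpow x (n + 1) = cpow x n ≫ x := rfl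

lemma cpow_succ' {A : C} (x : A ⟶ A) (n : ℕ) : cpow x (n + 1) = x ≫ cpow x n := by
  induction n with
  | zero => simp [cpow]
  | succ n ih =>
      conv_lhs => rw [cpow_succ x (n + 1), ih]
      rw [Category.assoc, ← cpow_succ]

lemma comm_cpow {A : C} {x e : A ⟶ A} (h : x ≫ e = e ≫ x) (n : ℕ) :
    cpow x n ≫ e = e ≫ cpow x n := by
  induction n with
  | zero => simp [cpow]
  | succ n ih =>
      rw [cpow_succ, Category.assoc, h, ← Category.assoc, ih, Category.assoc]

lemma cpow_mul {A : C} {x e : A ⟶ A} (h : x ≫ e = e ≫ x) (n : ℕ) :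
    cpow (x ≫ e) n = cpow x n ≫ cpow e n := by
  induction n with
  | zero => simp [cpow]
  | succ n ih =>
      rw [cpow_succ, ih, cpow_succ, cpow_succ]
      simp only [Category.assoc]
      rw [← Category.assoc (cpow e n) x e, comm_cpow h.symm n, Category.assoc]

lemma absorb_left {A B : C} {p : A ⟶ B} {x : B ⟶ A} (h : p ≫ x ≫ p = p) (n : ℕ) :
    cpow (p ≫ x) n ≫ p = p := by
  induction n with
  | zero => simp [cpow]
  | succ n ih => simp only [cpow_succ, Category.assoc, h, ih]

lemma absorb_right {A B : C} {p : A ⟶ B} {x : B ⟶ A} (h : p ≫ x ≫ p = p) (n : ℕ) :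
    p ≫ cpow (x ≫ p) n = p := by
  induction n with
  | zero => simp [cpow]
  | succ n ih => rw [cpow_succ', ← Category.assoc, ← Category.assoc, Category.assoc p x p, h, ih]

lemma idem_cpow {A : C} {p : A ⟶ A} (h : p ≫ p = p) (n : ℕ) : cpow p (n + 1) = p := by
  induction n with
  | zero => simp [cpow]
  | succ n ih => rw [cpow_succ, ih, h]

lemma mono_D1 {A : C} {x d : A ⟶ A} {k : ℕ} (h : cpow x (k + 1) ≫ d = cpow x k) :
    ∀ m, k ≤ m → cpow x (m + 1) ≫ d = cpow x m := by
  intro m hm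
  induction m, hm using Nat.le_induction with
  | base => exact h
  | succ m hm ih => rw [cpow_succ' x (m + 1), Category.assoc, ih, ← cpow_succ']

lemma drazin_unique {A : C} {x d e : A ⟶ A}
    (hd : IsDrazinInv x d) (he : IsDrazinInv x e) : d = e := by
  obtain ⟨⟨k1, hk1⟩, hd2, hd3⟩ := hd
  obtain ⟨⟨k2, hk2⟩, he2, he3⟩ := he
  set k := max k1 k2 with hk
  have hd1 : cpow x (k + 1) ≫ d = cpow x k := mono_D1 hk1 k (le_max_left _ _)
  have he1 : cpow x (k + 1) ≫ e = cpow x k := mono_D1 hk2 k (le_max_right _ _)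
  have hex : (e ≫ x) ≫ (e ≫ x) = e ≫ x := by
    simp only [Category.assoc]; rw [reassoc_of% he2]
  have hxd : (x ≫ d) ≫ (x ≫ d) = x ≫ d := by
    simp only [Category.assoc]; rw [hd2]
  have e1 : e = (e ≫ x) ≫ d := by
    calc e = cpow (e ≫ x) (k + 1) ≫ e := (absorb_left he2 (k + 1)).symm
    _ = cpow e (k + 1) ≫ cpow x (k + 1) ≫ e := by
        rw [cpow_mul he3.symm, Category.assoc]
    _ = cpow e (k + 1) ≫ cpow x k := by rw [he1]
    _ = cpow e (k + 1) ≫ cpow x (k + 1) ≫ d := by rw [hd1]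
    _ = cpow (e ≫ x) (k + 1) ≫ d := by rw [cpow_mul he3.symm, Category.assoc]
    _ = (e ≫ x) ≫ d := by rw [idem_cpow hex]
  have e2 : d = (e ≫ x) ≫ d := by
    calc d = d ≫ cpow (x ≫ d) (k + 1) := (absorb_right hd2 (k + 1)).symm
    _ = (d ≫ cpow x (k + 1)) ≫ cpow d (k + 1) := by rw [cpow_mul hd3, Category.assoc]
    _ = (cpow x (k + 1) ≫ d) ≫ cpow d (k + 1) := by rw [comm_cpow hd3]
    _ = cpow x k ≫ cpow d (k + 1) := by rw [hd1]
    _ = (cpow x (k + 1) ≫ e) ≫ cpow d (k + 1) := by rw [he1]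
    _ = (e ≫ cpow x (k + 1)) ≫ cpow d (k + 1) := by rw [comm_cpow he3]
    _ = e ≫ cpow (x ≫ d) (k + 1) := by rw [cpow_mul hd3, Category.assoc]
    _ = e ≫ x ≫ d := by rw [idem_cpow hxd]
    _ = (e ≫ x) ≫ d := by rw [Category.assoc]
  exact e2.trans e1.symm

lemma dag_cpow (D : Dagger C) {A : C} (x : A ⟶ A) (n : ℕ) :
    D.dag (cpow x n) = cpow (D.dag x) n := by
  induction n with
  | zero => simp [cpow, D.dag_id]
  | succ n ih => rw [cpow_succ, D.dag_comp, ih, cpow_succ']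

lemma drazin_dag_self (D : Dagger C) {A : C} {x d : A ⟶ A}
    (hx : D.dag x = x) (hd : IsDrazinInv x d) : D.dag d = d := by
  obtain ⟨⟨k, h1⟩, h2, h3⟩ := hd
  have hcomm : x ≫ D.dag d = D.dag d ≫ x := by
    have h := congrArg D.dag h3
    rw [D.dag_comp, D.dag_comp, hx] at h
    exact h.symm
  have hdag : IsDrazinInv x (D.dag d) := by
    refine ⟨⟨k, ?_⟩, ?_, hcomm⟩
    · have h := congrArg D.dag h1
      rw [D.dag_comp, dag_cpow, dag_cpow, hx] at h
      rw [comm_cpow hcomm]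
      exact h
    · have h := congrArg D.dag h2
      rw [D.dag_comp, D.dag_comp, hx, Category.assoc] at h
      exact h
  exact drazin_unique hdag ⟨⟨k, h1⟩, h2, h3⟩

lemma swap_cpow {A B : C} (f : A ⟶ B) (g : B ⟶ A) (n : ℕ) :
    f ≫ cpow (g ≫ f) n = cpow (f ≫ g) n ≫ f := by
  induction n with
  | zero => simp [cpow]
  | succ n ih =>
      rw [cpow_succ' (g ≫ f) n, cpow_succ' (f ≫ g) n]
      simp only [Category.assoc]
      rw [← ih]

lemma onetwo (D : Dagger C) {A B : C} (f : A ⟶ B) :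
    (∃ p, IsDagDrazinInv D f p) → ∃ q, IsDagDrazinInv D (D.dag f) q := by
  rintro ⟨p, ⟨⟨k, h1a, h1b⟩, h2, h3, h4⟩⟩
  have hpf : D.dag f ≫ D.dag p = p ≫ f := by rw [← D.dag_comp, h4]
  have hfp : D.dag p ≫ D.dag f = f ≫ p := by rw [← D.dag_comp, h3]
  have hx_sa : D.dag (f ≫ D.dag f) = f ≫ D.dag f := by rw [D.dag_comp, D.dag_dag]
  have hy_sa : D.dag (D.dag f ≫ f) = D.dag f ≫ f := by rw [D.dag_comp, D.dag_dag]
  refine ⟨D.dag p, ⟨⟨k, ?_, ?_⟩, ?_, ?_, ?_⟩⟩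
  · -- cpow (D.dag f ≫ D.dag (D.dag f)) k ≫ D.dag f ≫ D.dag p = ...
    rw [D.dag_dag]
    have h := congrArg D.dag h1b
    rw [D.dag_comp, D.dag_comp, dag_cpow, hy_sa, Category.assoc] at h
    exact h
  · rw [D.dag_dag]
    have h := congrArg D.dag h1a
    rw [D.dag_comp, D.dag_comp, dag_cpow, hx_sa, hfp] at h
    rw [← Category.assoc, hfp]
    exact h
  · simp only [← D.dag_comp]
    rw [Category.assoc, h2]
  · rw [hpf, h4]
  · rw [hfp, h3]

lemma onethree (D : Dagger C) {A B : C} (f : A ⟶ B) :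
    (∃ p, IsDagDrazinInv D f p) → ∃ d, IsDrazinInv (f ≫ D.dag f) d := by
  rintro ⟨p, ⟨⟨k, h1a, h1b⟩, h2, h3, h4⟩⟩
  have hpf : D.dag f ≫ D.dag p = p ≫ f := by rw [← D.dag_comp, h4]
  have hfp : D.dag p ≫ D.dag f = f ≫ p := by rw [← D.dag_comp, h3]
  have hxd : f ≫ D.dag f ≫ D.dag p ≫ p = f ≫ p := by
    rw [reassoc_of% hpf, h2]
  have hdx : D.dag p ≫ p ≫ f ≫ D.dag f = f ≫ p := by
    have h := congrArg D.dag hxd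
    simp only [D.dag_comp, D.dag_dag, Category.assoc] at h
    rw [← Category.assoc (D.dag p), hfp, Category.assoc] at h
    -- h should now be of shape ... = f ≫ p
    exact h
  refine ⟨D.dag p ≫ p, ⟨⟨k, ?_⟩, ?_, ?_⟩⟩
  · rw [cpow_succ]
    simp only [Category.assoc]
    rw [hxd]
    exact h1a
  · simp only [Category.assoc]
    rw [reassoc_of% hpf, h2, h2]
  · simp only [Category.assoc]
    rw [hxd, hdx]

lemma threeone (D : Dagger C) {A B : C} (f : A ⟶ B) :
    (∃ d, IsDrazinInv (f ≫ D.dag f) d) → ∃ p, IsDagDrazinInv D f p := by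
  rintro ⟨d, hd⟩
  have hx_sa : D.dag (f ≫ D.dag f) = f ≫ D.dag f := by rw [D.dag_comp, D.dag_dag]
  have hdd : D.dag d = d := drazin_dag_self D hx_sa hd
  obtain ⟨⟨k, h1⟩, h2, h3⟩ := hd
  have h2' : d ≫ f ≫ D.dag f ≫ d = d := by
    simpa only [Category.assoc] using h2
  have h3' : f ≫ D.dag f ≫ d = d ≫ f ≫ D.dag f := by
    simpa only [Category.assoc] using h3
  refine ⟨D.dag f ≫ d, ⟨⟨k + 1, ?_, ?_⟩, ?_, ?_, ?_⟩⟩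
  · have hm := mono_D1 h1 (k + 1) (Nat.le_succ k)
    rw [cpow_succ] at hm
    simpa only [Category.assoc] using hm
  · simp only [Category.assoc]
    rw [swap_cpow f (D.dag f) (k + 1), ← reassoc_of% (comm_cpow h3 (k + 1)),
      reassoc_of% h1, cpow_succ' (D.dag f ≫ f) k, Category.assoc,
      swap_cpow f (D.dag f) k]
  · simp only [Category.assoc]
    rw [h2']
  · simp only [D.dag_comp, D.dag_dag, hdd, Category.assoc]
    exact h3'.symm
  · simp only [D.dag_comp, D.dag_dag, hdd, Category.assoc]

end Aux

/-- `f` is †-Drazin iff `f†` is †-Drazin iff `f ≫ f†` is Drazin iff `f† ≫ f` is Drazin. -/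
theorem dagDrazin_tfae {C : Type u} [Category.{v} C] (D : Dagger C)
    {A B : C} (f : A ⟶ B) :
    List.TFAE
      [∃ p : B ⟶ A, IsDagDrazinInv D f p,
       ∃ q : A ⟶ B, IsDagDrazinInv D (D.dag f) q,
       ∃ d : A ⟶ A, IsDrazinInv (f ≫ D.dag f) d,
       ∃ e : B ⟶ B, IsDrazinInv (D.dag f ≫ f) e] := by
  tfae_have 1 → 2 := onetwo D f
  tfae_have 2 → 1 := by
    intro h
    have h' := onetwo D (D.dag f) h
    rwa [D.dag_dag] at h'
  tfae_have 1 → 3 := onethree D f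
  tfae_have 3 → 1 := threeone D f
  tfae_have 2 → 4 := by
    intro h
    have h' := onethree D (D.dag f) h
    rwa [D.dag_dag] at h'
  tfae_have 4 → 2 := by
    intro h
    exact threeone D (D.dag f) (by rwa [D.dag_dag])
  tfae_finish
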